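/- Let (X,d) be a length space, ρ > 0, and a, x ∈ X with d(a,x) ≤ ρ. Then for every r with 0 ≤ r ≤ ρ there exists c ∈ X such that the open ball B(c, r/2) is contained in B(a,ρ) ∩ B(x,r). -/
import Mathlib

open Set

/-- A metric space is a length space if every pair of points is joined by an
isometric map of the interval `[0, dist x y]` realizing the distance. -/
def IsLengthSpace (X : Type*) [MetricSpace X] : Prop :=
  ∀ x y : X, ∃ f : ℝ → X, f 0 = x ∧ f (dist x y) = y ∧
    ∀ s ∈ Set.Icc (0 : ℝ) (dist x y), ∀ t ∈ Set.Icc (0 : ℝ) (dist x y),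
      dist (f s) (f t) = |s - t|

theorem stmt_4 {X : Type*} [MetricSpace X] (hX : IsLengthSpace X)
    (ρ : ℝ) (hρ : 0 < ρ) (a x : X) (hd : dist a x ≤ ρ)
    (r : ℝ) (hr0 : 0 ≤ r) (hrρ : r ≤ ρ) :
    ∃ c : X, Metric.ball c (r / 2) ⊆ Metric.ball a ρ ∩ Metric.ball x r := by
  rcases lt_or_ge (dist a x) (r / 2) with h | h
  · refine ⟨a, fun y hy => ?_⟩
    simp only [Metric.mem_ball, mem_inter_iff] at hy ⊢
    have h1 := dist_triangle y a x
    exact ⟨by linarith, by linarith⟩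
  · obtain ⟨f, hf0, hfd, hiso⟩ := hX a x
    set d := dist a x with hdd
    have hd0 : (0 : ℝ) ≤ d := dist_nonneg
    have ht0 : 0 ≤ d - r / 2 := by linarith
    have htd : d - r / 2 ≤ d := by linarith
    have hac : dist a (f (d - r / 2)) = d - r / 2 := by
      have h2 := hiso 0 ⟨le_refl 0, hd0⟩ (d - r / 2) ⟨ht0, htd⟩
      rw [hf0] at h2
      rw [h2, abs_of_nonpos (by linarith)]; ring
    have hcx : dist (f (d - r / 2)) x = r / 2 := by
      have h2 := hiso (d - r / 2) ⟨ht0, htd⟩ d ⟨hd0, le_refl d⟩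
      rw [hfd] at h2
      rw [h2, abs_of_nonpos (by linarith)]; ring
    refine ⟨f (d - r / 2), fun y hy => ?_⟩
    simp only [Metric.mem_ball, mem_inter_iff] at hy ⊢
    constructor
    · have h1 := dist_triangle y (f (d - r / 2)) a
      rw [dist_comm (f (d - r / 2)) a, hac] at h1
      linarith
    · have h1 := dist_triangle y (f (d - r / 2)) x
      rw [hcx] at h1
      linarith
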